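/- Let R be a commutative ring, X = {1,…,m}, k ≤ m, n = C(m,k), and A = ⊕_{i=1}^{nk} R e_i with orthogonal idempotents summing to 1. Let S = { s ∈ I(X) : |dom(s)| ≤ k } and define β on maximal elements s (with dom(s) = M_i, im(s) = M_j among the k-subsets M_1,…,M_n of X) by β_s(Σ_l r_l e_{(i−1)k+l}) = Σ_l r_l e_{(j−1)k+σ_s(l)} where σ_s is the permutation induced by s, and β_s = 0 for non-maximal s. Then β is an orthogonal action of the inverse semigroup S on A. -/

import Mathlib

open Finset

/-- The domain of a partial bijection of `Fin m`, as a finset. -/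
noncomputable def pDom {m : ℕ} (s : Fin m ≃. Fin m) : Finset (Fin m) :=
  Finset.univ.filter fun a => (s a).isSome

/-- The position, for the increasing enumeration, of `x` in a `k`-element
finset `F` (junk value if `x ∉ F`). -/
noncomputable def posOf {m k : ℕ} (hk : 0 < k) (F : Finset (Fin m))
    (hF : F.card = k) (x : Fin m) : Fin k :=
  if hx : x ∈ F then (F.orderIsoOfFin hF).symm ⟨x, hx⟩ else ⟨0, hk⟩

/-- The `l`-th element of a `k`-element finset, in increasing order. -/
noncomputable def elemAt {m k : ℕ} (F : Finset (Fin m)) (hF : F.card = k)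
    (l : Fin k) : Fin m := (F.orderIsoOfFin hF l : Fin m)



lemma mem_pDom {m : ℕ} {s : Fin m ≃. Fin m} {x : Fin m} :
    x ∈ pDom s ↔ (s x).isSome := by simp [pDom]

lemma mem_pDom_symm {m : ℕ} {s : Fin m ≃. Fin m} {x y : Fin m} (h : s x = some y) :
    y ∈ pDom s.symm := by
  rw [mem_pDom, s.eq_some_iff.2 h]; rfl

lemma card_pDom_symm {m : ℕ} (s : Fin m ≃. Fin m) :
    (pDom s.symm).card = (pDom s).card := by
  refine Finset.card_bij' (fun y hy => (s.symm y).get (mem_pDom.1 hy))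
    (fun x hx => (s x).get (mem_pDom.1 hx)) ?_ ?_ ?_ ?_
  · intro y hy
    have h : s.symm y = some ((s.symm y).get (mem_pDom.1 hy)) := (Option.some_get _).symm
    have h2 := s.eq_some_iff.1 h
    rw [mem_pDom, h2]; rfl
  · intro x hx
    have h : s x = some ((s x).get (mem_pDom.1 hx)) := (Option.some_get _).symm
    have h2 := s.eq_some_iff.2 h
    rw [mem_pDom]; simp only [h2]; rfl
  · intro y hy
    have h : s.symm y = some ((s.symm y).get (mem_pDom.1 hy)) := (Option.some_get _).symm
    have h2 := s.eq_some_iff.1 h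
    simp [h2]
  · intro x hx
    have h : s x = some ((s x).get (mem_pDom.1 hx)) := (Option.some_get _).symm
    have h2 := s.eq_some_iff.2 h
    simp [h2]

lemma elemAt_mem {m k : ℕ} (F : Finset (Fin m)) (hF : F.card = k) (l : Fin k) :
    elemAt F hF l ∈ F := (F.orderIsoOfFin hF l).2

lemma posOf_elemAt {m k : ℕ} (hk : 0 < k) (F : Finset (Fin m)) (hF : F.card = k) (l : Fin k) :
    posOf hk F hF (elemAt F hF l) = l := by
  rw [posOf, dif_pos (elemAt_mem F hF l)]
  exact (congrArg _ (Subtype.ext rfl)).trans ((F.orderIsoOfFin hF).symm_apply_apply l)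

lemma elemAt_posOf {m k : ℕ} (hk : 0 < k) (F : Finset (Fin m)) (hF : F.card = k)
    {x : Fin m} (hx : x ∈ F) : elemAt F hF (posOf hk F hF x) = x := by
  rw [posOf, dif_pos hx]
  simp [elemAt]

lemma elemAt_injective {m k : ℕ} (F : Finset (Fin m)) (hF : F.card = k) :
    Function.Injective (elemAt F hF) := by
  intro a b h
  exact (F.orderIsoOfFin hF).injective (Subtype.ext h)

-- sigma machinery
noncomputable def sigmaOf {m k : ℕ} (hk : 0 < k) (s : Fin m ≃. Fin m)
    (hd : (pDom s).card = k) (hr : (pDom s.symm).card = k) (l : Fin k) : Fin k :=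
  posOf hk (pDom s.symm) hr
    ((s (elemAt (pDom s) hd l)).getD (elemAt (pDom s) hd l))

lemma apply_elemAt {m k : ℕ} (hk : 0 < k) (s : Fin m ≃. Fin m)
    (hd : (pDom s).card = k) (hr : (pDom s.symm).card = k) (l : Fin k) :
    s (elemAt (pDom s) hd l) =
      some (elemAt (pDom s.symm) hr (sigmaOf hk s hd hr l)) := by
  have hx : elemAt (pDom s) hd l ∈ pDom s := elemAt_mem _ _ _
  obtain ⟨y, hy⟩ := Option.isSome_iff_exists.1 (mem_pDom.1 hx)
  rw [hy]
  congr 1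
  rw [sigmaOf, hy]
  exact (elemAt_posOf hk _ hr (mem_pDom_symm hy)).symm

lemma sigmaOf_bijective {m k : ℕ} (hk : 0 < k) (s : Fin m ≃. Fin m)
    (hd : (pDom s).card = k) (hr : (pDom s.symm).card = k) :
    Function.Bijective (sigmaOf hk s hd hr) := by
  rw [Fintype.bijective_iff_injective_and_card]
  refine ⟨fun a b h => ?_, rfl⟩
  have ha := apply_elemAt hk s hd hr a
  have hb := apply_elemAt hk s hd hr b
  rw [h] at ha
  have ha' := s.eq_some_iff.2 ha
  have hb' := s.eq_some_iff.2 hb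
  exact elemAt_injective _ hd (Option.some_injective _ (ha'.symm.trans hb'))

lemma sigmaOf_eq {m k : ℕ} (hk : 0 < k) (s : Fin m ≃. Fin m)
    (hd : (pDom s).card = k) (hr : (pDom s.symm).card = k) (l : Fin k) {y : Fin m}
    (h : s (elemAt (pDom s) hd l) = some y) :
    elemAt (pDom s.symm) hr (sigmaOf hk s hd hr l) = y := by
  have := apply_elemAt hk s hd hr l
  rw [h] at this
  exact (Option.some_injective _ this).symm

-- partial identities and idempotents
noncomputable def pid {m : ℕ} (F : Finset (Fin m)) : Fin m ≃. Fin m :=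
  letI : DecidablePred (· ∈ (F : Set (Fin m))) := Classical.decPred _
  PEquiv.ofSet (F : Set (Fin m))

lemma pid_eq_some_iff {m : ℕ} {F : Finset (Fin m)} {x y : Fin m} :
    pid F x = some y ↔ y = x ∧ x ∈ F := by
  rw [pid]
  rw [PEquiv.ofSet_eq_some_iff]
  simp only [Finset.coe_mem, Finset.mem_coe, and_congr_right_iff]
  intro h; rw [h]

lemma pid_apply_mem {m : ℕ} {F : Finset (Fin m)} {x : Fin m} (hx : x ∈ F) :
    pid F x = some x := pid_eq_some_iff.2 ⟨rfl, hx⟩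

lemma pid_apply_not_mem {m : ℕ} {F : Finset (Fin m)} {x : Fin m} (hx : x ∉ F) :
    pid F x = none := by
  cases h : pid F x with
  | none => rfl
  | some y => exact absurd (pid_eq_some_iff.1 h).2 hx

lemma pid_symm {m : ℕ} (F : Finset (Fin m)) : (pid F).symm = pid F := by
  refine PEquiv.ext fun x => ?_
  by_cases hx : x ∈ F
  · rw [pid_apply_mem hx]
    exact (pid F).eq_some_iff.2 (pid_apply_mem hx)
  · rw [pid_apply_not_mem hx]
    cases h : (pid F).symm x with
    | none => rfl
    | some y =>
      obtain ⟨rfl, hyF⟩ := pid_eq_some_iff.1 ((pid F).eq_some_iff.1 h)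
      exact absurd hyF hx

lemma pDom_pid {m : ℕ} (F : Finset (Fin m)) : pDom (pid F) = F := by
  ext x
  rw [mem_pDom]
  constructor
  · intro h
    obtain ⟨y, hy⟩ := Option.isSome_iff_exists.1 h
    exact (pid_eq_some_iff.1 hy).2
  · intro h
    rw [pid_apply_mem h]; rfl

lemma trans_apply {m : ℕ} (s t : Fin m ≃. Fin m) (x : Fin m) :
    (s.trans t) x = (s x).bind t := rfl

lemma pid_idem {m : ℕ} (F : Finset (Fin m)) : (pid F).trans (pid F) = pid F := by
  refine PEquiv.ext fun x => ?_
  rw [trans_apply]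
  by_cases hx : x ∈ F
  · rw [pid_apply_mem hx, Option.bind_some, pid_apply_mem hx]
  · rw [pid_apply_not_mem hx, Option.bind_none]

lemma idem_eq_pid {m : ℕ} {f : Fin m ≃. Fin m} (h : f.trans f = f) :
    f = pid (pDom f) := by
  refine PEquiv.ext fun x => ?_
  cases hfx : f x with
  | none =>
    rw [pid_apply_not_mem (by rw [mem_pDom, hfx]; simp)]
  | some y =>
    have hx : x ∈ pDom f := by rw [mem_pDom, hfx]; rfl
    have h1 : (f x).bind f = some y := by rw [← trans_apply, h, hfx]
    rw [hfx] at h1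
    have h2 : f y = some y := by simpa using h1
    have h3 : f.symm y = some x := f.eq_some_iff.2 hfx
    have h4 : f.symm y = some y := f.eq_some_iff.2 h2
    have : x = y := (Option.some_injective _ (h3.symm.trans h4))
    rw [pid_apply_mem hx, this]

-- algebra lemmas
section Alg
variable {R A : Type*} [CommRing R] [CommRing A] [Algebra R A] {n k : ℕ}
  (e : Fin n → Fin k → A)

lemma block_mul_block
    (horth : ∀ i l i' l', e i l * e i' l' = if i = i' ∧ l = l' then e i l else 0)
    (c c' : Fin k → R) (i j : Fin n) :
    (∑ l, c l • e i l) * (∑ l, c' l • e j l) =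
      if i = j then ∑ l, (c l * c' l) • e i l else 0 := by
  rw [Finset.sum_mul_sum]
  have key : ∀ l l' : Fin k, (c l • e i l) * (c' l' • e j l') =
      if i = j ∧ l = l' then (c l * c' l') • e i l else 0 := by
    intro l l'
    rw [smul_mul_smul_comm, horth]
    split_ifs with h
    · rfl
    · exact smul_zero _
  simp only [key]
  by_cases hij : i = j
  · subst hij
    simp only [true_and, if_true]
    refine Finset.sum_congr rfl fun l _ => ?_
    rw [Finset.sum_ite_eq Finset.univ l (fun l' => (c l * c' l') • e i l), if_pos (Finset.mem_univ l)]
  · simp [hij]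

lemma ext_block_sum (c : Fin k → R) (i : Fin n) :
    (∑ i', ∑ l, (if i' = i then c l else 0) • e i' l) = ∑ l, c l • e i l := by
  rw [Finset.sum_eq_single i]
  · simp
  · intro b _ hb; simp [hb]
  · simp

lemma coeff_unique
    (hfree : ∀ a : A, ∃! c : Fin n → Fin k → R, a = ∑ i, ∑ l, c i l • e i l)
    (c c' : Fin n → Fin k → R)
    (h : (∑ i, ∑ l, c i l • e i l) = ∑ i, ∑ l, c' i l • e i l) : c = c' := by
  obtain ⟨c0, _, hu⟩ := hfree (∑ i, ∑ l, c i l • e i l)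
  exact (hu c rfl).trans (hu c' h).symm

lemma block_coeff_eq
    (hfree : ∀ a : A, ∃! c : Fin n → Fin k → R, a = ∑ i, ∑ l, c i l • e i l)
    {c c' : Fin k → R} {i j : Fin n}
    (h : (∑ l, c l • e i l) = ∑ l, c' l • e j l) :
    (fun (i' : Fin n) (l : Fin k) => if i' = i then c l else 0) =
      fun i' l => if i' = j then c' l else 0 := by
  apply coeff_unique e hfree
  rw [ext_block_sum, ext_block_sum, h]

lemma block_coeff_unique
    (hfree : ∀ a : A, ∃! c : Fin n → Fin k → R, a = ∑ i, ∑ l, c i l • e i l)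
    {c c' : Fin k → R} {i : Fin n}
    (h : (∑ l, c l • e i l) = ∑ l, c' l • e i l) : c = c' := by
  have := congrFun (block_coeff_eq e hfree h) i
  simpa using this

lemma block_eq_zero
    (hfree : ∀ a : A, ∃! c : Fin n → Fin k → R, a = ∑ i, ∑ l, c i l • e i l)
    {c : Fin k → R} {i : Fin n}
    (h : (∑ l, c l • e i l) = 0) : c = 0 := by
  have h' : (∑ l, c l • e i l) = ∑ l, (0 : Fin k → R) l • e i l := by simpa using h
  have := block_coeff_unique e hfree h'
  simpa using this

lemma block_ne_zero
    (hfree : ∀ a : A, ∃! c : Fin n → Fin k → R, a = ∑ i, ∑ l, c i l • e i l)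
    {c c' : Fin k → R} {i j : Fin n} (hij : i ≠ j)
    (h : (∑ l, c l • e i l) = ∑ l, c' l • e j l) : c = 0 ∧ c' = 0 := by
  have h1 := congrFun (block_coeff_eq e hfree h) i
  have h2 := congrFun (block_coeff_eq e hfree h) j
  constructor
  · have := funext fun l => congrFun h1 l
    funext l; simpa [hij] using congrFun this l
  · have := funext fun l => congrFun h2 l
    funext l; simpa [Ne.symm hij] using (congrFun this l).symm

lemma mem_block_iff
    (horth : ∀ i l i' l', e i l * e i' l' = if i = i' ∧ l = l' then e i l else 0)
    (hfree : ∀ a : A, ∃! c : Fin n → Fin k → R, a = ∑ i, ∑ l, c i l • e i l)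
    (i : Fin n) (a : A) :
    a ∈ Ideal.span (Set.range (e i)) ↔ ∃ c : Fin k → R, a = ∑ l, c l • e i l := by
  constructor
  · intro h
    refine Submodule.span_induction ?_ ?_ ?_ ?_ h
    · rintro x ⟨l, rfl⟩
      exact ⟨fun l' => if l' = l then 1 else 0, by simp [ite_smul]⟩
    · exact ⟨0, by simp⟩
    · rintro x y - - ⟨c, rfl⟩ ⟨c', rfl⟩
      exact ⟨c + c', by rw [← Finset.sum_add_distrib]; simp [add_smul]⟩
    · rintro x a - ⟨c, rfl⟩
      obtain ⟨d, hd, -⟩ := hfree x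
      refine ⟨fun l => d i l * c l, ?_⟩
      rw [smul_eq_mul, hd, Finset.sum_mul, Finset.sum_eq_single i]
      · rw [block_mul_block e horth, if_pos rfl]
      · intro b _ hb
        rw [block_mul_block e horth, if_neg hb]
      · simp
  · rintro ⟨c, rfl⟩
    refine Submodule.sum_mem _ fun l _ => ?_
    rw [Algebra.smul_def]
    exact Ideal.mul_mem_left _ _ (Ideal.subset_span ⟨l, rfl⟩)

lemma block_reindex {σ : Fin k → Fin k} (hσ : Function.Bijective σ)
    (c : Fin k → R) (j : Fin n) :
    (∑ l, c l • e j (σ l)) = ∑ l, c ((Equiv.ofBijective σ hσ).symm l) • e j l := by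
  have := Equiv.sum_comp (Equiv.ofBijective σ hσ)
    (fun l => c ((Equiv.ofBijective σ hσ).symm l) • e j l)
  rw [← this]
  refine Finset.sum_congr rfl fun l _ => ?_
  exact congrArg (fun r : R => r • e j (σ l))
    (congrArg c ((Equiv.ofBijective σ hσ).symm_apply_apply l).symm)

end Alg

-- composition helpers
lemma elemAt_congr {m k : ℕ} {F F' : Finset (Fin m)} (h : F = F') (hF : F.card = k)
    (hF' : F'.card = k) (l : Fin k) : elemAt F hF l = elemAt F' hF' l := by
  subst h; rfl

lemma pDom_trans_subset {m : ℕ} (s t : Fin m ≃. Fin m) :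
    pDom (t.trans s) ⊆ pDom t := by
  intro x hx
  rw [mem_pDom] at hx ⊢
  rw [trans_apply] at hx
  cases h : t x with
  | none => rw [h] at hx; simp at hx
  | some y => rfl

lemma pDom_trans_symm_subset {m : ℕ} (s t : Fin m ≃. Fin m) :
    pDom (t.trans s).symm ⊆ pDom s.symm := by
  rw [PEquiv.symm_trans_rev]
  exact pDom_trans_subset t.symm s.symm

lemma mid_subset {m : ℕ} {s t : Fin m ≃. Fin m}
    (hDt : pDom (t.trans s) = pDom t) : pDom t.symm ⊆ pDom s := by
  intro y hy
  obtain ⟨x, hx⟩ := Option.isSome_iff_exists.1 (mem_pDom.1 hy)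
  have htx : t x = some y := t.eq_some_iff.1 hx
  have hxd : x ∈ pDom t := by rw [mem_pDom, htx]; rfl
  rw [← hDt, mem_pDom, trans_apply, htx, Option.bind_some] at hxd
  rwa [mem_pDom]

lemma mid_subset' {m : ℕ} {s t : Fin m ≃. Fin m}
    (hmid : pDom t.symm = pDom s) : pDom t ⊆ pDom (t.trans s) := by
  intro x hx
  obtain ⟨y, hy⟩ := Option.isSome_iff_exists.1 (mem_pDom.1 hx)
  have hys : y ∈ pDom s := hmid ▸ mem_pDom_symm hy
  rw [mem_pDom, trans_apply, hy, Option.bind_some]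
  exact mem_pDom.1 hys

lemma sigma_trans {m k : ℕ} (hk : 0 < k) (s t : Fin m ≃. Fin m)
    (hdt : (pDom t).card = k) (hrt : (pDom t.symm).card = k)
    (hds : (pDom s).card = k) (hrs : (pDom s.symm).card = k)
    (hdst : (pDom (t.trans s)).card = k) (hrst : (pDom (t.trans s).symm).card = k)
    (hDt : pDom (t.trans s) = pDom t) (hRs : pDom (t.trans s).symm = pDom s.symm)
    (hmid : pDom t.symm = pDom s) (l : Fin k) :
    sigmaOf hk (t.trans s) hdst hrst l = sigmaOf hk s hds hrs (sigmaOf hk t hdt hrt l) := by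
  have h1 := apply_elemAt hk (t.trans s) hdst hrst l
  have h2 := apply_elemAt hk t hdt hrt l
  have h3 := apply_elemAt hk s hds hrs (sigmaOf hk t hdt hrt l)
  have ex : elemAt (pDom (t.trans s)) hdst l = elemAt (pDom t) hdt l :=
    elemAt_congr hDt _ _ _
  have ey : elemAt (pDom t.symm) hrt (sigmaOf hk t hdt hrt l) =
      elemAt (pDom s) hds (sigmaOf hk t hdt hrt l) := elemAt_congr hmid _ _ _
  have h4 : (t.trans s) (elemAt (pDom (t.trans s)) hdst l) =
      some (elemAt (pDom s.symm) hrs (sigmaOf hk s hds hrs (sigmaOf hk t hdt hrt l))) := by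
    rw [ex, trans_apply, h2, Option.bind_some, ey]
    exact h3
  rw [h1] at h4
  have := Option.some_injective _ h4
  rw [elemAt_congr hRs hrst hrs] at this
  exact elemAt_injective _ hrs this

section Alg2
variable {R A : Type*} [CommRing R] [CommRing A] [Algebra R A] {n k : ℕ}
  (e : Fin n → Fin k → A)

lemma block_mul_e
    (horth : ∀ i l i' l', e i l * e i' l' = if i = i' ∧ l = l' then e i l else 0)
    (c : Fin k → R) (i0 : Fin n) (l : Fin k) :
    (∑ l', c l' • e i0 l') * e i0 l = c l • e i0 l := by
  have h : e i0 l = ∑ l', (if l' = l then (1:R) else 0) • e i0 l' := by simp [ite_smul]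
  rw [h, block_mul_block e horth, if_pos rfl, Finset.sum_eq_single l]
  · simp
  · intro b _ hb; simp [hb]
  · simp

lemma sum_comp_block {σ : Fin k → Fin k} (hσ : Function.Bijective σ)
    (d : Fin k → R) (j : Fin n) :
    (∑ l, d (σ l) • e j (σ l)) = ∑ l, d l • e j l :=
  Equiv.sum_comp (Equiv.ofBijective σ hσ) (fun l => d l • e j l)

/-- The ideal of elements killing the block `i0`. -/
noncomputable def Kblock (i0 : Fin n) : Ideal A where
  carrier := {a | ∀ l, a * e i0 l = 0}
  add_mem' := by intro a b ha hb l; rw [add_mul, ha, hb, add_zero]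
  zero_mem' := fun l => zero_mul _
  smul_mem' := by intro x a ha l; rw [smul_eq_mul, mul_assoc, ha, mul_zero]

lemma mem_Kblock {i0 : Fin n} {a : A} : a ∈ Kblock e i0 ↔ ∀ l, a * e i0 l = 0 :=
  Iff.rfl

lemma block_le_Kblock
    (horth : ∀ i l i' l', e i l * e i' l' = if i = i' ∧ l = l' then e i l else 0)
    {i j : Fin n} (hij : i ≠ j) :
    Ideal.span (Set.range (e i)) ≤ Kblock e j := by
  rw [Ideal.span_le]
  rintro x ⟨l, rfl⟩ l'
  rw [horth, if_neg (by simp [hij])]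

lemma disjoint_Kblock
    (horth : ∀ i l i' l', e i l * e i' l' = if i = i' ∧ l = l' then e i l else 0)
    (hfree : ∀ a : A, ∃! c : Fin n → Fin k → R, a = ∑ i, ∑ l, c i l • e i l)
    (i0 : Fin n) : Disjoint (Ideal.span (Set.range (e i0))) (Kblock e i0) := by
  rw [Submodule.disjoint_def]
  intro a ha hK
  obtain ⟨c, rfl⟩ := (mem_block_iff e horth hfree i0 a).1 ha
  refine Finset.sum_eq_zero fun l _ => ?_
  have := hK l
  rwa [block_mul_e e horth] at this

end Alg2

/-- Let `R` be a commutative ring, `X = {1,…,m}`, `k ≤ m`, `n = C(m,k)` and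
`A = ⊕_{i=1}^{nk} R e_i` with orthogonal idempotents summing to `1`
(reindexed here as `e i l` for `i : Fin n`, `l : Fin k`, so that the block
`e i ·` corresponds to the `k`-subset `M i` of `X`).  Let
`S = { s ∈ I(X) : #dom(s) ≤ k }`, an inverse semigroup under composition
`s * t = t.trans s` and inversion `s⁻¹ = s.symm`, and define `β` on a maximal
`s` (with `dom s = M i`, `im s = M j`) by
`β_s (∑ c_l e i l) = ∑ c_l e j (σ_s l)` where `σ_s` is the permutation of
positions induced by `s`, and `β_s = 0` for non-maximal `s`.  Then `β` is an
orthogonal action of the inverse semigroup `S` on `A`. -/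
theorem exgeral_orthogonal_action
    (R A : Type*) [CommRing R] [CommRing A] [Algebra R A]
    (m k n : ℕ) (hk : 0 < k) (hkm : k ≤ m) (hn : n = m.choose k)
    (M : Fin n ≃ {F : Finset (Fin m) // F.card = k})
    (e : Fin n → Fin k → A)
    (horth : ∀ i l i' l', e i l * e i' l' = if i = i' ∧ l = l' then e i l else 0)
    (hsum : (∑ i, ∑ l, e i l) = 1)
    (hfree : ∀ a : A, ∃! c : Fin n → Fin k → R, a = ∑ i, ∑ l, c i l • e i l)
    (S : Set (Fin m ≃. Fin m)) (hS : S = {s | (pDom s).card ≤ k})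
    (E : (Fin m ≃. Fin m) → Ideal A) (beta : (Fin m ≃. Fin m) → A → A)
    (hEmax : ∀ s ∈ S, ∀ hr : (pDom s.symm).card = k,
      E s = Ideal.span (Set.range (e (M.symm ⟨pDom s.symm, hr⟩))))
    (hEbot : ∀ s ∈ S, (pDom s.symm).card ≠ k → E s = ⊥)
    (hbetamax : ∀ s ∈ S, ∀ (hd : (pDom s).card = k) (hr : (pDom s.symm).card = k)
        (c : Fin k → R),
      beta s (∑ l, c l • e (M.symm ⟨pDom s, hd⟩) l) =
        ∑ l, c l • e (M.symm ⟨pDom s.symm, hr⟩)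
          (posOf hk (pDom s.symm) hr
            ((s (elemAt (pDom s) hd l)).getD (elemAt (pDom s) hd l))))
    (hbetazero : ∀ s, beta s 0 = 0) :
    -- β is an action of the inverse semigroup S on A:
    (∀ s ∈ S, ∀ a ∈ E s.symm, beta s a ∈ E s) ∧
    (∀ s ∈ S, ∀ b ∈ E s, ∃ a ∈ E s.symm, beta s a = b) ∧
    (∀ s ∈ S, ∀ a ∈ E s.symm, ∀ b ∈ E s.symm, beta s a = beta s b → a = b) ∧
    (∀ s ∈ S, ∀ a ∈ E s.symm, ∀ b ∈ E s.symm,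
      beta s (a + b) = beta s a + beta s b) ∧
    (∀ s ∈ S, ∀ a ∈ E s.symm, ∀ b ∈ E s.symm,
      beta s (a * b) = beta s a * beta s b) ∧
    (∀ s ∈ S, ∀ r : R, ∀ a ∈ E s.symm, beta s (r • a) = r • beta s a) ∧
    (∀ s ∈ S, ∀ t ∈ S, ∀ a : A,
      a ∈ E (t.trans s).symm ↔ a ∈ E t.symm ∧ beta t a ∈ E s.symm) ∧
    (∀ s ∈ S, ∀ t ∈ S, ∀ a ∈ E (t.trans s).symm,
      beta (t.trans s) a = beta s (beta t a)) ∧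
    -- and the action is orthogonal: A = ⊕_{f ∈ E(S)} E_f:
    ((⨆ f : {f : Fin m ≃. Fin m // f ∈ S ∧ f.trans f = f}, E f.1) = ⊤ ∧
      ∀ f : {f : Fin m ≃. Fin m // f ∈ S ∧ f.trans f = f},
        Disjoint (E f.1)
          (⨆ g : {g : {f : Fin m ≃. Fin m // f ∈ S ∧ f.trans f = f} // g ≠ f},
            E g.1.1)) := by
  classical
  have hmem : ∀ (i : Fin n) (a : A),
      a ∈ Ideal.span (Set.range (e i)) ↔ ∃ c : Fin k → R, a = ∑ l, c l • e i l :=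
    mem_block_iff e horth hfree
  have hblkmem : ∀ (i : Fin n) (c : Fin k → R) (g : Fin k → Fin k),
      (∑ l, c l • e i (g l)) ∈ Ideal.span (Set.range (e i)) := fun i c g =>
    Submodule.sum_mem _ fun l _ => by
      rw [Algebra.smul_def]
      exact Ideal.mul_mem_left _ _ (Ideal.subset_span ⟨_, rfl⟩)
  have hScard : ∀ s ∈ S, (pDom s).card ≤ k := fun s hs => by rw [hS] at hs; exact hs
  have hSsymm : ∀ s ∈ S, s.symm ∈ S := fun s hs => by
    rw [hS]; exact le_of_eq_of_le (card_pDom_symm s) (hScard s hs)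
  have hEs : ∀ s ∈ S, ∀ hd : (pDom s).card = k,
      E s = Ideal.span (Set.range (e (M.symm
        ⟨pDom s.symm, (card_pDom_symm s).trans hd⟩))) :=
    fun s hs hd => hEmax s hs _
  have hEsymm : ∀ s ∈ S, ∀ hd : (pDom s).card = k,
      E s.symm = Ideal.span (Set.range (e (M.symm ⟨pDom s, hd⟩))) :=
    fun s hs hd => hEmax s.symm (hSsymm s hs) hd
  have hEbot1 : ∀ s ∈ S, (pDom s).card ≠ k → E s = ⊥ := fun s hs h =>
    hEbot s hs (fun hc => h ((card_pDom_symm s).symm.trans hc))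
  have hEbot2 : ∀ s ∈ S, (pDom s).card ≠ k → E s.symm = ⊥ := fun s hs h =>
    hEbot s.symm (hSsymm s hs) h
  have hbeta : ∀ s ∈ S, ∀ (hd : (pDom s).card = k) (c : Fin k → R),
      beta s (∑ l, c l • e (M.symm ⟨pDom s, hd⟩) l) =
        ∑ l, c l • e (M.symm ⟨pDom s.symm, (card_pDom_symm s).trans hd⟩)
          (sigmaOf hk s hd ((card_pDom_symm s).trans hd) l) :=
    fun s hs hd c => hbetamax s hs hd _ c
  refine ⟨?_, ?_, ?_, ?_, ?_, ?_, ?_, ?_, ?_, ?_⟩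
  · -- beta s maps E s.symm into E s
    intro s hs a ha
    by_cases hd : (pDom s).card = k
    · obtain ⟨c, rfl⟩ := (hmem _ a).1 (by rwa [hEsymm s hs hd] at ha)
      rw [hbeta s hs hd c, hEs s hs hd]
      exact hblkmem _ _ _
    · rw [hEbot2 s hs hd, Submodule.mem_bot] at ha
      rw [ha, hbetazero]
      exact Submodule.zero_mem _
  · -- surjectivity onto E s
    intro s hs b hb
    by_cases hd : (pDom s).card = k
    · have hr : (pDom s.symm).card = k := (card_pDom_symm s).trans hd
      obtain ⟨d, rfl⟩ := (hmem _ b).1 (by rwa [hEs s hs hd] at hb)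
      have hσ := sigmaOf_bijective hk s hd hr
      refine ⟨∑ l, d (sigmaOf hk s hd hr l) • e (M.symm ⟨pDom s, hd⟩) l, ?_, ?_⟩
      · rw [hEsymm s hs hd]; exact (hmem _ _).2 ⟨_, rfl⟩
      · rw [hbeta s hs hd]
        exact sum_comp_block e hσ d _
    · rw [hEbot1 s hs hd, Submodule.mem_bot] at hb
      exact ⟨0, Submodule.zero_mem _, by rw [hbetazero, hb]⟩
  · -- injectivity
    intro s hs a ha b hb hab
    by_cases hd : (pDom s).card = k
    · have hr : (pDom s.symm).card = k := (card_pDom_symm s).trans hd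
      obtain ⟨c, rfl⟩ := (hmem _ a).1 (by rwa [hEsymm s hs hd] at ha)
      obtain ⟨c', rfl⟩ := (hmem _ b).1 (by rwa [hEsymm s hs hd] at hb)
      rw [hbeta s hs hd c, hbeta s hs hd c'] at hab
      have hσ := sigmaOf_bijective hk s hd hr
      rw [block_reindex e hσ c, block_reindex e hσ c'] at hab
      have hcc := block_coeff_unique e hfree hab
      have hc : c = c' := by
        funext l
        have := congrFun hcc (Equiv.ofBijective _ hσ l)
        simpa using this
      rw [hc]
    · rw [hEbot2 s hs hd, Submodule.mem_bot] at ha hb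
      rw [ha, hb]
  · -- additivity
    intro s hs a ha b hb
    by_cases hd : (pDom s).card = k
    · obtain ⟨c, rfl⟩ := (hmem _ a).1 (by rwa [hEsymm s hs hd] at ha)
      obtain ⟨c', rfl⟩ := (hmem _ b).1 (by rwa [hEsymm s hs hd] at hb)
      have hadd : (∑ l, c l • e (M.symm ⟨pDom s, hd⟩) l) +
          (∑ l, c' l • e (M.symm ⟨pDom s, hd⟩) l) =
          ∑ l, (c l + c' l) • e (M.symm ⟨pDom s, hd⟩) l := by
        rw [← Finset.sum_add_distrib]
        exact Finset.sum_congr rfl fun l _ => (add_smul _ _ _).symm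
      rw [hadd, hbeta s hs hd, hbeta s hs hd c, hbeta s hs hd c',
        ← Finset.sum_add_distrib]
      exact Finset.sum_congr rfl fun l _ => add_smul _ _ _
    · rw [hEbot2 s hs hd, Submodule.mem_bot] at ha hb
      rw [ha, hb, add_zero, hbetazero, add_zero]
  · -- multiplicativity
    intro s hs a ha b hb
    by_cases hd : (pDom s).card = k
    · have hr : (pDom s.symm).card = k := (card_pDom_symm s).trans hd
      obtain ⟨c, rfl⟩ := (hmem _ a).1 (by rwa [hEsymm s hs hd] at ha)
      obtain ⟨c', rfl⟩ := (hmem _ b).1 (by rwa [hEsymm s hs hd] at hb)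
      have hσ := sigmaOf_bijective hk s hd hr
      rw [block_mul_block e horth c c', if_pos rfl, hbeta s hs hd,
        hbeta s hs hd c, hbeta s hs hd c',
        block_reindex e hσ c, block_reindex e hσ c',
        block_reindex e hσ (fun l => c l * c' l),
        block_mul_block e horth, if_pos rfl]
    · rw [hEbot2 s hs hd, Submodule.mem_bot] at ha hb
      rw [ha, hb, mul_zero, hbetazero, mul_zero]
  · -- R-linearity
    intro s hs r a ha
    by_cases hd : (pDom s).card = k
    · obtain ⟨c, rfl⟩ := (hmem _ a).1 (by rwa [hEsymm s hs hd] at ha)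
      have hsm : r • (∑ l, c l • e (M.symm ⟨pDom s, hd⟩) l) =
          ∑ l, (r * c l) • e (M.symm ⟨pDom s, hd⟩) l := by
        rw [Finset.smul_sum]
        exact Finset.sum_congr rfl fun l _ => (mul_smul r (c l) _).symm
      rw [hsm, hbeta s hs hd, hbeta s hs hd c, Finset.smul_sum]
      exact Finset.sum_congr rfl fun l _ => mul_smul r (c l) _
    · rw [hEbot2 s hs hd, Submodule.mem_bot] at ha
      rw [ha, smul_zero, hbetazero, smul_zero]
  · -- domain of composite
    intro s hs t ht a
    have hstS : t.trans s ∈ S := by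
      rw [hS]
      exact le_trans (Finset.card_le_card (pDom_trans_subset s t)) (hScard t ht)
    by_cases hmax : (pDom (t.trans s)).card = k
    · have hDt : pDom (t.trans s) = pDom t :=
        Finset.eq_of_subset_of_card_le (pDom_trans_subset s t)
          (le_trans (hScard t ht) hmax.ge)
      have hdt : (pDom t).card = k := by rw [← hDt]; exact hmax
      have hrt : (pDom t.symm).card = k := (card_pDom_symm t).trans hdt
      have hrst : (pDom (t.trans s).symm).card = k := (card_pDom_symm _).trans hmax
      have hRs : pDom (t.trans s).symm = pDom s.symm :=
        Finset.eq_of_subset_of_card_le (pDom_trans_symm_subset s t)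
          (le_trans (le_of_eq_of_le (card_pDom_symm s) (hScard s hs)) hrst.ge)
      have hrs : (pDom s.symm).card = k := by rw [← hRs]; exact hrst
      have hds : (pDom s).card = k := (card_pDom_symm s).symm.trans hrs
      have hmid : pDom t.symm = pDom s :=
        Finset.eq_of_subset_of_card_le (mid_subset hDt) (le_of_eq_of_le hds hrt.ge)
      have hIdx : M.symm ⟨pDom (t.trans s), hmax⟩ = M.symm ⟨pDom t, hdt⟩ :=
        congrArg M.symm (Subtype.ext hDt)
      have hE1 : E (t.trans s).symm = E t.symm := by
        rw [hEsymm _ hstS hmax, hEsymm t ht hdt, hIdx]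
      constructor
      · intro ha
        refine ⟨by rw [← hE1]; exact ha, ?_⟩
        obtain ⟨c, rfl⟩ := (hmem _ a).1
          (by rw [hE1, hEsymm t ht hdt] at ha; exact ha)
        rw [hbeta t ht hdt c, hEsymm s hs hds]
        have hJI : M.symm ⟨pDom t.symm, hrt⟩ = M.symm ⟨pDom s, hds⟩ :=
          congrArg M.symm (Subtype.ext hmid)
        rw [hJI]
        exact hblkmem _ _ _
      · rintro ⟨ha, -⟩
        rw [hE1]; exact ha
    · have hbot : E (t.trans s).symm = ⊥ := hEbot2 _ hstS hmax
      constructor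
      · intro ha
        rw [hbot, Submodule.mem_bot] at ha
        rw [ha, hbetazero]
        exact ⟨Submodule.zero_mem _, Submodule.zero_mem _⟩
      · rintro ⟨ha1, ha2⟩
        rw [hbot, Submodule.mem_bot]
        by_cases hdt : (pDom t).card = k
        · have hrt : (pDom t.symm).card = k := (card_pDom_symm t).trans hdt
          obtain ⟨c, rfl⟩ := (hmem _ a).1 (by rwa [hEsymm t ht hdt] at ha1)
          rw [hbeta t ht hdt c] at ha2
          have hσt := sigmaOf_bijective hk t hdt hrt
          rw [block_reindex e hσt c] at ha2
          have hczero : ∀ l', c ((Equiv.ofBijective _ hσt).symm l') = 0 := by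
            by_cases hds : (pDom s).card = k
            · have hne : pDom t.symm ≠ pDom s := by
                intro hmid
                apply hmax
                rw [Finset.eq_of_subset_of_card_le (pDom_trans_subset s t)
                  (Finset.card_le_card (mid_subset' hmid))]
                exact hdt
              obtain ⟨d, hd2⟩ := (hmem _ _).1 (by rwa [hEsymm s hs hds] at ha2)
              have hinej : M.symm ⟨pDom t.symm, hrt⟩ ≠ M.symm ⟨pDom s, hds⟩ := by
                intro h
                exact hne (congrArg (fun z => (z : Finset (Fin m)))
                  (congrArg Subtype.val (M.symm.injective h)))
              have hz := block_ne_zero e hfree hinej hd2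
              exact fun l' => congrFun hz.1 l'
            · rw [hEbot2 s hs hds, Submodule.mem_bot] at ha2
              have := block_eq_zero e hfree ha2
              exact fun l' => congrFun this l'
          have hc : c = 0 := by
            funext l
            have := hczero (Equiv.ofBijective _ hσt l)
            simpa using this
          rw [hc]
          simp
        · rw [hEbot2 t ht hdt, Submodule.mem_bot] at ha1
          exact ha1
  · -- composition
    intro s hs t ht a ha
    have hstS : t.trans s ∈ S := by
      rw [hS]
      exact le_trans (Finset.card_le_card (pDom_trans_subset s t)) (hScard t ht)
    by_cases hmax : (pDom (t.trans s)).card = k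
    · have hDt : pDom (t.trans s) = pDom t :=
        Finset.eq_of_subset_of_card_le (pDom_trans_subset s t)
          (le_trans (hScard t ht) hmax.ge)
      have hdt : (pDom t).card = k := by rw [← hDt]; exact hmax
      have hrt : (pDom t.symm).card = k := (card_pDom_symm t).trans hdt
      have hrst : (pDom (t.trans s).symm).card = k := (card_pDom_symm _).trans hmax
      have hRs : pDom (t.trans s).symm = pDom s.symm :=
        Finset.eq_of_subset_of_card_le (pDom_trans_symm_subset s t)
          (le_trans (le_of_eq_of_le (card_pDom_symm s) (hScard s hs)) hrst.ge)
      have hrs : (pDom s.symm).card = k := by rw [← hRs]; exact hrst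
      have hds : (pDom s).card = k := (card_pDom_symm s).symm.trans hrs
      have hmid : pDom t.symm = pDom s :=
        Finset.eq_of_subset_of_card_le (mid_subset hDt) (le_of_eq_of_le hds hrt.ge)
      obtain ⟨c, rfl⟩ := (hmem _ a).1 (by rwa [hEsymm _ hstS hmax] at ha)
      have hσt := sigmaOf_bijective hk t hdt hrt
      -- left side
      rw [hbeta _ hstS hmax c]
      -- right side: first rewrite the block index to that of t
      have hI : M.symm ⟨pDom (t.trans s), hmax⟩ = M.symm ⟨pDom t, hdt⟩ :=
        congrArg M.symm (Subtype.ext hDt)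
      have hJ : M.symm ⟨pDom t.symm, hrt⟩ = M.symm ⟨pDom s, hds⟩ :=
        congrArg M.symm (Subtype.ext hmid)
      have hK : M.symm ⟨pDom (t.trans s).symm, hrst⟩ = M.symm ⟨pDom s.symm, hrs⟩ :=
        congrArg M.symm (Subtype.ext hRs)
      conv_rhs => rw [hI, hbeta t ht hdt c, hJ, block_reindex e hσt c,
        hbeta s hs hds]
      rw [hK]
      have hst := fun l => sigma_trans hk s t hdt hrt hds hrs hmax hrst hDt hRs hmid l
      have := Equiv.sum_comp (Equiv.ofBijective _ hσt)
        (fun l => c ((Equiv.ofBijective _ hσt).symm l) •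
          e (M.symm ⟨pDom s.symm, hrs⟩) (sigmaOf hk s hds hrs l))
      rw [← this]
      refine Finset.sum_congr rfl fun l _ => ?_
      rw [hst l]
      exact congrArg (fun r : R => r • e (M.symm ⟨pDom s.symm, hrs⟩)
        (sigmaOf hk s hds hrs (sigmaOf hk t hdt hrt l)))
        (congrArg c ((Equiv.ofBijective _ hσt).symm_apply_apply l)).symm
    · have hbot : E (t.trans s).symm = ⊥ := hEbot2 _ hstS hmax
      rw [hbot, Submodule.mem_bot] at ha
      rw [ha, hbetazero, hbetazero, hbetazero]
  · -- supremum is everything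
    rw [Ideal.eq_top_iff_one, ← hsum]
    refine Submodule.sum_mem _ fun i _ => Submodule.sum_mem _ fun l _ => ?_
    have hpidS : pid (↑(M i) : Finset (Fin m)) ∈ S := by
      rw [hS]
      show (pDom (pid (↑(M i) : Finset (Fin m)))).card ≤ k
      rw [pDom_pid]
      exact (M i).2.le
    have hridem : (pid (↑(M i) : Finset (Fin m))).trans (pid _) = pid _ := pid_idem _
    have hr : (pDom (pid (↑(M i) : Finset (Fin m))).symm).card = k := by
      rw [pid_symm, pDom_pid]; exact (M i).2
    have hvals : pDom (pid (↑(M i) : Finset (Fin m))).symm = ↑(M i) := by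
      rw [pid_symm, pDom_pid]
    have hsub : (⟨pDom (pid (↑(M i) : Finset (Fin m))).symm, hr⟩ :
        {F : Finset (Fin m) // F.card = k}) = M i :=
      Subtype.ext hvals
    have hEpid : E (pid (↑(M i) : Finset (Fin m))) = Ideal.span (Set.range (e i)) := by
      rw [hEmax _ hpidS hr, hsub, Equiv.symm_apply_apply]
    have : e i l ∈ E (pid (↑(M i) : Finset (Fin m))) := by
      rw [hEpid]; exact Ideal.subset_span ⟨l, rfl⟩
    exact Submodule.mem_iSup_of_mem
      (⟨pid (↑(M i) : Finset (Fin m)), hpidS, hridem⟩ :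
        {f : Fin m ≃. Fin m // f ∈ S ∧ f.trans f = f}) this
  · -- disjointness
    intro f
    by_cases hdf : (pDom f.1).card = k
    · have hrf : (pDom f.1.symm).card = k := (card_pDom_symm _).trans hdf
      set i0 : Fin n := M.symm ⟨pDom f.1.symm, hrf⟩ with hi0
      have hEf : E f.1 = Ideal.span (Set.range (e i0)) := hEmax f.1 f.2.1 hrf
      rw [hEf]
      refine Disjoint.mono_right ?_ (disjoint_Kblock e horth hfree i0)
      refine iSup_le fun g => ?_
      by_cases hdg : (pDom g.1.1).card = k
      · have hrg : (pDom g.1.1.symm).card = k := (card_pDom_symm _).trans hdg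
        have hEg : E g.1.1 = Ideal.span (Set.range (e (M.symm ⟨pDom g.1.1.symm, hrg⟩))) :=
          hEmax g.1.1 g.1.2.1 hrg
        rw [hEg]
        refine block_le_Kblock e horth ?_
        intro h
        apply g.2
        have hsub : (⟨pDom g.1.1.symm, hrg⟩ : {F : Finset (Fin m) // F.card = k}) =
            ⟨pDom f.1.symm, hrf⟩ := M.symm.injective h
        have hfq : pDom g.1.1.symm = pDom f.1.symm := congrArg Subtype.val hsub
        have hgp : g.1.1 = pid (pDom g.1.1) := idem_eq_pid g.1.2.2
        have hfp : f.1 = pid (pDom f.1) := idem_eq_pid f.2.2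
        have hgsymm : pDom g.1.1.symm = pDom g.1.1 := by
          conv_lhs => rw [hgp, pid_symm, pDom_pid]
        have hfsymm : pDom f.1.symm = pDom f.1 := by
          conv_lhs => rw [hfp, pid_symm, pDom_pid]
        have : pDom g.1.1 = pDom f.1 := by rw [← hgsymm, ← hfsymm]; exact hfq
        refine Subtype.ext ?_
        rw [hgp, hfp, this]
      · rw [hEbot1 g.1.1 g.1.2.1 hdg]
        exact bot_le
    · rw [hEbot1 f.1 f.2.1 hdf]
      exact disjoint_bot_left
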